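/- Let n ≥ 1, let V be a finite-dimensional complex vector space, and let ρ : SL(2,ℤ) → GL(V) be a group homomorphism whose kernel contains the principal congruence subgroup Γ(n). Let W ⊆ V be a ρ-invariant subspace and let ζ be an eigenvalue of the restriction of ρ(T) to W, where T = [[1,1],[0,1]]. Then for every integer a coprime to n, ζ^{a²} is also an eigenvalue of the restriction of ρ(T) to W. -/

import Mathlib

/-- Let `ρ : SL(2,ℤ) → GL(V)` be a finite-dimensional complex representation
whose kernel contains the principal congruence subgroup `Γ(n)`, let `W` be a `ρ`-invariant
subspace and `ζ` an eigenvalue of `ρ(T)` on `W`.  Then for every integer `a` coprime to `n`,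
`ζ^(a²)` is also an eigenvalue of `ρ(T)` on `W`. -/
theorem spectrum_closed_under_galois_squares
    (n : ℕ) (hn : 1 ≤ n) (V : Type*) [AddCommGroup V] [Module ℂ V] [FiniteDimensional ℂ V]
    (ρ : Matrix.SpecialLinearGroup (Fin 2) ℤ →* (V →ₗ[ℂ] V)ˣ)
    (hker : CongruenceSubgroup.Gamma n ≤ ρ.ker)
    (W : Submodule ℂ V)
    (hW : ∀ g : Matrix.SpecialLinearGroup (Fin 2) ℤ, ∀ x ∈ W, (ρ g : V →ₗ[ℂ] V) x ∈ W)
    (ζ : ℂ)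
    (hζ : ∃ x ∈ W, x ≠ 0 ∧ (ρ ModularGroup.T : V →ₗ[ℂ] V) x = ζ • x)
    (a : ℤ) (ha : IsCoprime a (n : ℤ)) :
    ∃ y ∈ W, y ≠ 0 ∧ (ρ ModularGroup.T : V →ₗ[ℂ] V) y = ζ ^ (a ^ 2) • y := by
  obtain ⟨x, hxW, hx0, hx⟩ := hζ
  obtain ⟨u, v, huv⟩ := ha
  -- the matrix γ = [[a, -v],[n, u]] has determinant 1
  have hdet : Matrix.det !![a, -v; (n : ℤ), u] = 1 := by
    simp [Matrix.det_fin_two_of]; linarith [huv]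
  set γ : Matrix.SpecialLinearGroup (Fin 2) ℤ := ⟨!![a, -v; (n : ℤ), u], hdet⟩ with hγ
  -- key congruence: γ * T * γ⁻¹ * (T^(a^2))⁻¹ ∈ Γ(n)
  have hkey : γ * ModularGroup.T * γ⁻¹ * (ModularGroup.T ^ (a ^ 2))⁻¹ ∈
      CongruenceSubgroup.Gamma n := by
    rw [CongruenceSubgroup.Gamma_mem']
    set f := @Matrix.SpecialLinearGroup.map (Fin 2) _ _ _ _ _ _ (Int.castRingHom (ZMod n))
    have h1 : ((u * a : ℤ) : ZMod n) = 1 := by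
      have : ((u * a + v * n : ℤ) : ZMod n) = ((1 : ℤ) : ZMod n) := by rw [huv]
      simpa using this
    have hcoe : ∀ g : Matrix.SpecialLinearGroup (Fin 2) ℤ, ∀ i j,
        (f g) i j = ((g i j : ℤ) : ZMod n) := fun _ _ _ => rfl
    have hγ' : ∀ i j, (f ⟨!![a, -v; (n : ℤ), u], hdet⟩) i j = ((!![a, -v; (n : ℤ), u] i j : ℤ) : ZMod n) :=
      fun _ _ => rfl
    have hcomm : f γ * f ModularGroup.T = f (ModularGroup.T ^ (a ^ 2)) * f γ := by
      ext i j
      rw [Matrix.SpecialLinearGroup.coe_mul, Matrix.SpecialLinearGroup.coe_mul,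
        Matrix.mul_apply, Matrix.mul_apply]
      simp only [Fin.sum_univ_two, hcoe, hγ, ModularGroup.coe_T, ModularGroup.coe_T_zpow]
      push_cast at h1
      fin_cases i <;> fin_cases j <;>
        simp [ZMod.natCast_self, Matrix.vecHead, hγ'] <;>
        linear_combination (-(a : ZMod n)) * h1
    simp only [map_mul, map_inv]
    rw [hcomm]
    group
  -- hence ρ(T)^(a^2) = ρ(γ) ρ(T) ρ(γ)⁻¹
  have hρ : ρ (ModularGroup.T ^ (a ^ 2)) = ρ γ * ρ ModularGroup.T * (ρ γ)⁻¹ := by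
    have := hker hkey
    rw [MonoidHom.mem_ker] at this
    simp only [map_mul, map_inv] at this
    have h2 := mul_eq_one_iff_eq_inv.mp this
    rw [inv_inv] at h2
    rw [h2]
  refine ⟨(ρ γ⁻¹ : V →ₗ[ℂ] V) x, hW γ⁻¹ x hxW, ?_, ?_⟩
  · have hid : (ρ γ : V →ₗ[ℂ] V) ((ρ γ⁻¹ : V →ₗ[ℂ] V) x) = x := by
      rw [← LinearMap.comp_apply, ← Module.End.mul_eq_comp, ← Units.val_mul, ← map_mul]
      simp
    intro h
    rw [h, map_zero] at hid
    exact hx0 hid.symm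
  · -- compute ρ(T) (ρ(γ⁻¹) x) = ζ^(a²) • ρ(γ⁻¹) x
    have hTx : ∀ m : ℕ, ((ρ ModularGroup.T : (V →ₗ[ℂ] V)ˣ) ^ m : (V →ₗ[ℂ] V)ˣ).val x
        = ζ ^ m • x := by
      intro m
      induction m with
      | zero => simp
      | succ k ih =>
        rw [pow_succ, Units.val_mul, Module.End.mul_apply, hx, map_smul, ih, smul_smul,
          ← pow_succ']
    have hT : ρ ModularGroup.T = (ρ γ)⁻¹ * ρ (ModularGroup.T ^ (a ^ 2)) * ρ γ := by
      rw [hρ]; group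
    have hnatsq : (a ^ 2 : ℤ) = ((a.natAbs ^ 2 : ℕ) : ℤ) := by
      push_cast [Int.natAbs_sq]
      rw [sq_abs]
    calc (ρ ModularGroup.T : V →ₗ[ℂ] V) ((ρ γ⁻¹ : V →ₗ[ℂ] V) x)
        = ((ρ ModularGroup.T * ρ γ⁻¹ : (V →ₗ[ℂ] V)ˣ) : V →ₗ[ℂ] V) x := by
          rw [Units.val_mul]; rfl
      _ = ((ρ γ⁻¹ * ρ (ModularGroup.T ^ (a ^ 2)) : (V →ₗ[ℂ] V)ˣ) : V →ₗ[ℂ] V) x := by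
          rw [hT, map_inv]; group
      _ = (ρ γ⁻¹ : V →ₗ[ℂ] V) ((ρ (ModularGroup.T ^ (a ^ 2)) : V →ₗ[ℂ] V) x) := by
          rw [Units.val_mul]; rfl
      _ = ζ ^ (a ^ 2) • (ρ γ⁻¹ : V →ₗ[ℂ] V) x := by
          rw [hnatsq, zpow_natCast, map_pow, hTx, map_smul, ← zpow_natCast ζ, ← hnatsq]
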